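/- In the setting of the compact SVD A = V₁Σ₁U₁ᵀ (U₁ᵀU₁ = V₁ᵀV₁ = I_r, Σ₁ = diag(σ₁,…,σ_r) with σ_i > 0, d_i = σ_i²), let w̄ ∈ ℝ^p, w₀ = U₁U₁ᵀw₀, and let ε : Ω → ℝ^n be a random vector on a probability space with E[ε] = 0 and E[ε_i ε_j] = σ²·δ_{ij} for a constant σ ≥ 0 (each product ε_i ε_j integrable). For each outcome, let w_k(ε) be the SAM iterates for G_ε(w) = AᵀA(w − w̄) − Aᵀε started at w₀, and let m_k = w_k(0) be the noiseless trajectory. Then for every k ≥ 0, E[(1/n)‖A(w_k(ε) − m_k)‖₂²] = (σ²/n) Σ_{i=1}^r (1 − (1 − ηd_i − ηρd_i²)^k)². -/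

import Mathlib

open Matrix MeasureTheory

/-- Variance of the SAM iterates on the least-squares loss with zero-mean noise of
covariance `σ²·I`: `E[(1/n)‖A(w_k(ε) − m_k)‖₂²] = (σ²/n) Σ_i (1 − (1 − ηd_i − ηρd_i²)^k)²`,
where `m_k` is the noiseless trajectory and `d_i = σ_i²`. -/
theorem sam_variance (n p r : ℕ)
    (A : Matrix (Fin n) (Fin p) ℝ)
    (U1 : Matrix (Fin p) (Fin r) ℝ) (V1 : Matrix (Fin n) (Fin r) ℝ)
    (s : Fin r → ℝ) (hs : ∀ i, 0 < s i)
    (hU : U1ᵀ * U1 = 1) (hV : V1ᵀ * V1 = 1)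
    (hA : A = V1 * Matrix.diagonal s * U1ᵀ)
    (d : Fin r → ℝ) (hd : ∀ i, d i = s i ^ 2)
    (wbar w0 : Fin p → ℝ)
    (hw0proj : w0 = (U1 * U1ᵀ).mulVec w0)
    (η ρ : ℝ)
    {Ω : Type*} [MeasurableSpace Ω] (P : Measure Ω) [IsProbabilityMeasure P]
    (ε : Ω → Fin n → ℝ) (hεmeas : Measurable ε)
    (σ : ℝ) (hσ : 0 ≤ σ)
    (hεint : ∀ i, Integrable (fun ω => ε ω i) P)
    (hεmean : ∀ i, ∫ ω, ε ω i ∂P = 0)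
    (hεprodint : ∀ i j, Integrable (fun ω => ε ω i * ε ω j) P)
    (hεcov : ∀ i j, ∫ ω, ε ω i * ε ω j ∂P = if i = j then σ ^ 2 else 0)
    (G : (Fin n → ℝ) → (Fin p → ℝ) → (Fin p → ℝ))
    (hG : ∀ e w, G e w = (Aᵀ * A).mulVec (w - wbar) - Aᵀ.mulVec e)
    (w : ℕ → (Fin n → ℝ) → Fin p → ℝ)
    (hw0 : ∀ e, w 0 e = w0)
    (hw : ∀ k e, w (k + 1) e = w k e - η • G e (w k e + ρ • G e (w k e)))
    (m : ℕ → Fin p → ℝ) (hm : ∀ k, m k = w k 0) :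
    ∀ k : ℕ,
      ∫ ω, (1 / (n : ℝ)) * ∑ j, (A.mulVec (w k (ε ω) - m k) j) ^ 2 ∂P
        = (σ ^ 2 / (n : ℝ)) *
            ∑ i, (1 - (1 - η * d i - η * ρ * d i ^ 2) ^ k) ^ 2 := by
  intro k
  have hdpos : ∀ i, 0 < d i := fun i => (hd i) ▸ pow_pos (hs i) 2
  have hdiag : ∀ (v y : Fin r → ℝ), Matrix.diagonal v *ᵥ y = fun i => v i * y i := by
    intro v y; funext i; simp [Matrix.mulVec_diagonal]
  -- matrix structure lemmas
  have hAt' : Aᵀ = U1 * Matrix.diagonal s * V1ᵀ := by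
    rw [hA]
    simp [Matrix.transpose_mul, Matrix.diagonal_transpose, Matrix.mul_assoc]
  have hMeq : Aᵀ * A = U1 * Matrix.diagonal d * U1ᵀ := by
    rw [hAt', hA]
    rw [show U1 * Matrix.diagonal s * V1ᵀ * (V1 * Matrix.diagonal s * U1ᵀ)
        = U1 * (Matrix.diagonal s * (V1ᵀ * V1) * Matrix.diagonal s) * U1ᵀ by
      simp [Matrix.mul_assoc]]
    rw [hV, Matrix.mul_one, Matrix.diagonal_mul_diagonal,
      show (fun i => s i * s i) = d from funext fun i => by rw [hd]; ring]
  have hMU : ∀ y : Fin r → ℝ, (Aᵀ * A) *ᵥ (U1 *ᵥ y) = U1 *ᵥ (fun i => d i * y i) := by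
    intro y
    rw [Matrix.mulVec_mulVec, hMeq, Matrix.mul_assoc (U1 * Matrix.diagonal d) U1ᵀ U1, hU,
      Matrix.mul_one, (Matrix.mulVec_mulVec y U1 (Matrix.diagonal d)).symm, hdiag]
  have hAe : ∀ e : Fin n → ℝ, Aᵀ *ᵥ e = U1 *ᵥ (fun i => s i * (V1ᵀ *ᵥ e) i) := by
    intro e
    rw [hAt', (Matrix.mulVec_mulVec e (U1 * Matrix.diagonal s) V1ᵀ).symm,
      (Matrix.mulVec_mulVec (V1ᵀ *ᵥ e) U1 (Matrix.diagonal s)).symm, hdiag]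
  have hAU : ∀ y : Fin r → ℝ, A *ᵥ (U1 *ᵥ y) = V1 *ᵥ (fun i => s i * y i) := by
    intro y
    rw [Matrix.mulVec_mulVec, hA, Matrix.mul_assoc (V1 * Matrix.diagonal s) U1ᵀ U1, hU,
      Matrix.mul_one, (Matrix.mulVec_mulVec y V1 (Matrix.diagonal s)).symm, hdiag]
  -- the key closed form for the noise part of the iterates
  have key : ∀ (k : ℕ) (e : Fin n → ℝ), w k e - w k 0 =
      U1 *ᵥ (fun i => (1 - (1 - η * d i - η * ρ * d i ^ 2) ^ k) / d i
        * (s i * (V1ᵀ *ᵥ e) i)) := by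
    intro k
    induction k with
    | zero =>
      intro e
      have h0 : (fun i => (1 - (1 - η * d i - η * ρ * d i ^ 2) ^ 0) / d i
          * (s i * (V1ᵀ *ᵥ e) i)) = (0 : Fin r → ℝ) := by
        funext i; simp
      rw [h0, Matrix.mulVec_zero, hw0, hw0, sub_self]
    | succ k ih =>
      intro e
      have h2 : w k e = w k 0 + U1 *ᵥ (fun i => (1 - (1 - η * d i - η * ρ * d i ^ 2) ^ k) / d i
          * (s i * (V1ᵀ *ᵥ e) i)) := by
        rw [← ih e]; abel
      have step1 : w (k + 1) e - w (k + 1) 0 =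
          U1 *ᵥ (fun i => (1 - (1 - η * d i - η * ρ * d i ^ 2) ^ k) / d i
            * (s i * (V1ᵀ *ᵥ e) i))
          - η • (U1 *ᵥ (fun i => d i * ((1 - (1 - η * d i - η * ρ * d i ^ 2) ^ k) / d i
            * (s i * (V1ᵀ *ᵥ e) i))))
          - (η * ρ) • (U1 *ᵥ (fun i => d i * (d i
            * ((1 - (1 - η * d i - η * ρ * d i ^ 2) ^ k) / d i * (s i * (V1ᵀ *ᵥ e) i)))))
          + (η * ρ) • (U1 *ᵥ (fun i => d i * (s i * (V1ᵀ *ᵥ e) i)))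
          + η • (U1 *ᵥ (fun i => s i * (V1ᵀ *ᵥ e) i)) := by
        rw [hw, hw]
        simp only [hG]
        rw [h2, hAe e]
        simp only [Matrix.mulVec_add, Matrix.mulVec_sub, Matrix.mulVec_smul,
          Matrix.mulVec_zero, hMU, smul_zero, sub_zero]
        module
      rw [step1]
      simp only [← Matrix.mulVec_smul, ← Matrix.mulVec_add, ← Matrix.mulVec_sub]
      refine congrArg (fun z => U1 *ᵥ z) (funext fun i => ?_)
      simp only [Pi.add_apply, Pi.sub_apply, Pi.smul_apply, smul_eq_mul]
      have hdi : d i ≠ 0 := (hdpos i).ne'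
      field_simp
      ring
  -- norm preservation by V1
  have hnorm : ∀ z : Fin r → ℝ, ∑ j, (V1 *ᵥ z) j ^ 2 = ∑ i, z i ^ 2 := by
    intro z
    have h1 : ∑ j, (V1 *ᵥ z) j ^ 2 = (V1 *ᵥ z) ⬝ᵥ (V1 *ᵥ z) := by
      simp [dotProduct, pow_two]
    rw [h1, Matrix.dotProduct_mulVec, ← Matrix.mulVec_transpose, Matrix.mulVec_mulVec, hV,
      Matrix.one_mulVec]
    simp [dotProduct, pow_two]
  have hAd : ∀ e : Fin n → ℝ, A *ᵥ (w k e - w k 0)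
      = V1 *ᵥ (fun i => (1 - (1 - η * d i - η * ρ * d i ^ 2) ^ k) * (V1ᵀ *ᵥ e) i) := by
    intro e
    rw [key k e, hAU]
    refine congrArg (fun z => V1 *ᵥ z) (funext fun i => ?_)
    have hsi : s i ≠ 0 := (hs i).ne'
    rw [hd]
    field_simp
  have hintg : ∀ ω, (1 / (n : ℝ)) * ∑ j, (A.mulVec (w k (ε ω) - m k) j) ^ 2
      = (1 / (n : ℝ)) * ∑ i, (1 - (1 - η * d i - η * ρ * d i ^ 2) ^ k) ^ 2
          * ((V1ᵀ *ᵥ ε ω) i) ^ 2 := by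
    intro ω
    rw [hm, hAd (ε ω), hnorm]
    congr 1
    exact Finset.sum_congr rfl fun i _ => by ring
  simp only [hintg]
  -- second moments of the projected noise
  have hsq : ∀ (i : Fin r) (ω : Ω), ((V1ᵀ *ᵥ ε ω) i) ^ 2
      = ∑ j, ∑ l, (V1 j i * V1 l i) * (ε ω j * ε ω l) := by
    intro i ω
    have hc : (V1ᵀ *ᵥ ε ω) i = ∑ j, V1 j i * ε ω j := by
      simp [Matrix.mulVec, dotProduct, Matrix.transpose_apply]
    rw [hc, pow_two, Finset.sum_mul_sum]
    exact Finset.sum_congr rfl fun jj _ => Finset.sum_congr rfl fun l _ => by ring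
  have hinti : ∀ i : Fin r, Integrable (fun ω => ((V1ᵀ *ᵥ ε ω) i) ^ 2) P := by
    intro i
    have h1 : Integrable (fun ω => ∑ j, ∑ l, (V1 j i * V1 l i) * (ε ω j * ε ω l)) P := by
      apply integrable_finset_sum
      intro j _
      apply integrable_finset_sum
      intro l _
      exact (hεprodint j l).const_mul _
    exact h1.congr (ae_of_all _ fun ω => (hsq i ω).symm)
  have hmom : ∀ i : Fin r, ∫ ω, ((V1ᵀ *ᵥ ε ω) i) ^ 2 ∂P = σ ^ 2 := by
    intro i
    have hcol : ∑ j, V1 j i * V1 j i = 1 := by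
      have h := congrFun (congrFun hV i) i
      simpa [Matrix.mul_apply, Matrix.transpose_apply, Matrix.one_apply] using h
    simp only [hsq i]
    rw [integral_finset_sum _ fun j _ =>
      integrable_finset_sum _ fun l _ => ((hεprodint j l).const_mul _)]
    have hj : ∀ j : Fin n, ∫ ω, ∑ l, (V1 j i * V1 l i) * (ε ω j * ε ω l) ∂P
        = V1 j i * V1 j i * σ ^ 2 := by
      intro j
      rw [integral_finset_sum _ fun l _ => ((hεprodint j l).const_mul _)]
      have hl : ∀ l : Fin n, ∫ ω, (V1 j i * V1 l i) * (ε ω j * ε ω l) ∂P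
          = (V1 j i * V1 l i) * (if j = l then σ ^ 2 else 0) := by
        intro l
        rw [MeasureTheory.integral_const_mul, hεcov]
      simp only [hl]
      simp [mul_ite, mul_zero, Finset.sum_ite_eq]
    simp only [hj]
    rw [← Finset.sum_mul, hcol, one_mul]
  rw [MeasureTheory.integral_const_mul]
  rw [MeasureTheory.integral_finset_sum _ fun i _ => (hinti i).const_mul _]
  simp only [MeasureTheory.integral_const_mul, hmom]
  rw [Finset.mul_sum, Finset.mul_sum]
  exact Finset.sum_congr rfl fun i _ => by ring
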